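/- (Theorem 5.2(i), two decision makers.) A control-sharing dynamic policy (γ₁*, γ₂^{cs*}) is person-by-person optimal (respectively, globally optimal) for J^{D,CS} if and only if the control-sharing static policy (γ₁*, δ₂^{cs*}) is person-by-person optimal (respectively, globally optimal) for J^{CS}, where δ₂^{cs*}(y, u, s) := γ₂^{cs*}(y, u, g(s, u)). Here person-by-person optimality of (γ₁*, γ₂) for a cost J means J(γ₁*, γ₂) ≤ J(γ₁, γ₂) for every measurable deviation γ₁ of DM1 and J(γ₁*, γ₂) ≤ J(γ₁*, β) for every measurable deviation β of DM2 in the corresponding policy class. -/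
import Mathlib


open MeasureTheory
open scoped ENNReal

/-- **Theorem 5.2(i) (two decision makers): the static measurements with control-sharing
reduction preserves person-by-person and global optimality.** A control-sharing dynamic
policy `(γ₁s, γ₂cs)` is person-by-person optimal (resp. globally optimal) for `JDCS` iff
the control-sharing static policy `(γ₁s, (y, u, s) ↦ γ₂cs (y, u, g (s, u)))` is
person-by-person optimal (resp. globally optimal) for `JCS`. -/
theorem control_sharing_reduction_pbp_and_global_optimality
    {Ω Ω₀ Y₁ Yh Yh' U₁ U₂ : Type*}
    [MeasurableSpace Ω] [MeasurableSpace Ω₀] [MeasurableSpace Y₁]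
    [MeasurableSpace Yh] [MeasurableSpace Yh'] [MeasurableSpace U₁] [MeasurableSpace U₂]
    (P : Measure Ω) [IsProbabilityMeasure P]
    (ω₀ : Ω → Ω₀) (y₁ : Ω → Y₁) (yhat₂ : Ω → Yh)
    (hω₀ : Measurable ω₀) (hy₁ : Measurable y₁) (hyhat₂ : Measurable yhat₂)
    (g : Yh × U₁ → Yh') (ginv : Yh' × U₁ → Yh)
    (hg : Measurable g) (hginv : Measurable ginv)
    (hgl : ∀ (s : Yh) (u : U₁), ginv (g (s, u), u) = s)
    (hgr : ∀ (t : Yh') (u : U₁), g (ginv (t, u), u) = t)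
    (c : Ω₀ × U₁ × U₂ → ℝ≥0∞) (hc : Measurable c)
    (JDCS : (Y₁ → U₁) → (Y₁ × U₁ × Yh' → U₂) → ℝ≥0∞)
    (JCS : (Y₁ → U₁) → (Y₁ × U₁ × Yh → U₂) → ℝ≥0∞)
    (hJDCS : ∀ γ₁ γ₂cs, JDCS γ₁ γ₂cs
      = ∫⁻ ω, c (ω₀ ω, γ₁ (y₁ ω),
          γ₂cs (y₁ ω, γ₁ (y₁ ω), g (yhat₂ ω, γ₁ (y₁ ω)))) ∂P)
    (hJCS : ∀ γ₁ δ₂cs, JCS γ₁ δ₂cs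
      = ∫⁻ ω, c (ω₀ ω, γ₁ (y₁ ω), δ₂cs (y₁ ω, γ₁ (y₁ ω), yhat₂ ω)) ∂P)
    (γ₁s : Y₁ → U₁) (γ₂cs : Y₁ × U₁ × Yh' → U₂)
    (hγ₁s : Measurable γ₁s) (hγ₂cs : Measurable γ₂cs) :
    -- person-by-person optimality transfers both ways
    (((∀ γ₁ : Y₁ → U₁, Measurable γ₁ → JDCS γ₁s γ₂cs ≤ JDCS γ₁ γ₂cs)
        ∧ (∀ β : Y₁ × U₁ × Yh' → U₂, Measurable β → JDCS γ₁s γ₂cs ≤ JDCS γ₁s β))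
      ↔ ((∀ γ₁ : Y₁ → U₁, Measurable γ₁ →
            JCS γ₁s (fun q => γ₂cs (q.1, q.2.1, g (q.2.2, q.2.1)))
              ≤ JCS γ₁ (fun q => γ₂cs (q.1, q.2.1, g (q.2.2, q.2.1))))
        ∧ (∀ β : Y₁ × U₁ × Yh → U₂, Measurable β →
            JCS γ₁s (fun q => γ₂cs (q.1, q.2.1, g (q.2.2, q.2.1))) ≤ JCS γ₁s β)))
    -- global optimality transfers both ways
    ∧ ((∀ (γ₁ : Y₁ → U₁) (β : Y₁ × U₁ × Yh' → U₂), Measurable γ₁ → Measurable β →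
          JDCS γ₁s γ₂cs ≤ JDCS γ₁ β)
      ↔ (∀ (γ₁ : Y₁ → U₁) (β : Y₁ × U₁ × Yh → U₂), Measurable γ₁ → Measurable β →
          JCS γ₁s (fun q => γ₂cs (q.1, q.2.1, g (q.2.2, q.2.1))) ≤ JCS γ₁ β)) := by
  -- static version of a dynamic policy
  have key : ∀ (γ : Y₁ → U₁) (β : Y₁ × U₁ × Yh' → U₂),
      JCS γ (fun q => β (q.1, q.2.1, g (q.2.2, q.2.1))) = JDCS γ β := by
    intro γ β; rw [hJCS, hJDCS]
  -- dynamic version of a static policy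
  have key2 : ∀ (γ : Y₁ → U₁) (β : Y₁ × U₁ × Yh → U₂),
      JDCS γ (fun q => β (q.1, q.2.1, ginv (q.2.2, q.2.1))) = JCS γ β := by
    intro γ β; rw [hJDCS, hJCS]; simp [hgl]
  have hmeasS : ∀ (β : Y₁ × U₁ × Yh' → U₂), Measurable β →
      Measurable (fun q : Y₁ × U₁ × Yh => β (q.1, q.2.1, g (q.2.2, q.2.1))) := by
    intro β hβ
    exact hβ.comp (measurable_fst.prodMk
      ((measurable_fst.comp measurable_snd).prodMk
        (hg.comp ((measurable_snd.comp measurable_snd).prodMk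
          (measurable_fst.comp measurable_snd)))))
  have hmeasD : ∀ (β : Y₁ × U₁ × Yh → U₂), Measurable β →
      Measurable (fun q : Y₁ × U₁ × Yh' => β (q.1, q.2.1, ginv (q.2.2, q.2.1))) := by
    intro β hβ
    exact hβ.comp (measurable_fst.prodMk
      ((measurable_fst.comp measurable_snd).prodMk
        (hginv.comp ((measurable_snd.comp measurable_snd).prodMk
          (measurable_fst.comp measurable_snd)))))
  constructor
  · constructor
    · rintro ⟨h1, h2⟩
      constructor
      · intro γ₁ hγ₁
        rw [key, key]; exact h1 γ₁ hγ₁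
      · intro β hβ
        rw [key, ← key2 γ₁s β]
        exact h2 _ (hmeasD β hβ)
    · rintro ⟨h1, h2⟩
      constructor
      · intro γ₁ hγ₁
        rw [← key, ← key γ₁]; exact h1 γ₁ hγ₁
      · intro β hβ
        rw [← key, ← key γ₁s β]
        exact h2 _ (hmeasS β hβ)
  · constructor
    · intro h γ₁ β hγ₁ hβ
      rw [key, ← key2 γ₁ β]
      exact h γ₁ _ hγ₁ (hmeasD β hβ)
    · intro h γ₁ β hγ₁ hβ
      rw [← key, ← key γ₁ β]
      exact h γ₁ _ hγ₁ (hmeasS β hβ)
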